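/- For clans C and D, the category C ⊸ D whose objects are clan morphisms C → D, whose morphisms are natural transformations, with limits computed pointwise, and where α : F → G is a fibration iff for every fibration c ↠ c' in C the gap map F(c) → F(c') ×_{G(c')} G(c) is a fibration in D, is itself a clan; moreover every fibration in C ⊸ D is a pointwise fibration. -/

import Mathlib

open CategoryTheory Limits

universe v u

/-- A clan structure on a category `C`: a terminal object together with a class of
"fibrations" closed under isomorphism, composition and pullback, containing all maps to the
terminal object, and such that pullbacks of fibrations exist. -/
structure Clan (C : Type u) [Category.{v} C] where
  /-- the class of fibrations -/
  Fib : ∀ ⦃a b : C⦄, (a ⟶ b) → Prop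
  /-- the terminal object -/
  T : C
  isTerminalT : IsTerminal T
  fib_toT : ∀ ⦃a : C⦄ (f : a ⟶ T), Fib f
  fib_iso : ∀ ⦃a b a' b' : C⦄ (f : a ⟶ b) (f' : a' ⟶ b'),
    (Arrow.mk f ≅ Arrow.mk f') → Fib f → Fib f'
  fib_comp : ∀ ⦃a b c : C⦄ (f : a ⟶ b) (g : b ⟶ c), Fib f → Fib g → Fib (f ≫ g)
  fib_pb_exists : ∀ ⦃a b c : C⦄ (g : a ⟶ b) (f : c ⟶ b), Fib f →
    ∃ (d : C) (p : d ⟶ a) (q : d ⟶ c), IsPullback p q g f ∧ Fib p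
  fib_pb_stable : ∀ ⦃d a b c : C⦄ (p : d ⟶ a) (q : d ⟶ c) (g : a ⟶ b) (f : c ⟶ b),
    IsPullback p q g f → Fib f → Fib p

variable {C : Type u} [Category.{v} C] {D : Type u} [Category.{v} D]

/-- A clan morphism: a functor preserving the terminal object, fibrations, and pullbacks of
fibrations. -/
def IsClanMor (S : Clan C) (S' : Clan D) (F : C ⥤ D) : Prop :=
  (∀ ⦃a b : C⦄ (f : a ⟶ b), S.Fib f → S'.Fib (F.map f)) ∧
  Nonempty (IsTerminal (F.obj S.T)) ∧
  (∀ ⦃d a b c : C⦄ (p : d ⟶ a) (q : d ⟶ c) (g : a ⟶ b) (f : c ⟶ b),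
    IsPullback p q g f → S.Fib f →
      IsPullback (F.map p) (F.map q) (F.map g) (F.map f))

/-- The category `C ⊸ D` of clan morphisms, with natural transformations as morphisms. -/
abbrev ClanMorCat (S : Clan C) (S' : Clan D) := ObjectProperty.FullSubcategory (IsClanMor S S')

/-- The fibration condition on a natural transformation `α : F ⟶ G` between clan morphisms:
for every fibration `c ↠ c'` in `C`, the gap map `F(c) ⟶ F(c') ×_{G(c')} G(c)` is a fibration
in `D`. -/
def GapFib (S : Clan C) (S' : Clan D) {A B : ClanMorCat S S'} (α : A ⟶ B) : Prop :=
  ∀ ⦃c c' : C⦄ (f : c ⟶ c'), S.Fib f →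
    ∀ ⦃P : D⦄ (p : P ⟶ A.obj.obj c') (q : P ⟶ B.obj.obj c),
      IsPullback p q (α.hom.app c') (B.obj.map f) →
        ∀ h : A.obj.obj c ⟶ P, h ≫ p = A.obj.map f →
          h ≫ q = α.hom.app c → S'.Fib h


namespace ClanAux

section Basics
variable {E : Type u} [Category.{v} E]

theorem fib_id (S : Clan E) (a : E) : S.Fib (𝟙 a) := by
  have sq : IsPullback (𝟙 a) (S.isTerminalT.from a) (S.isTerminalT.from a) (𝟙 S.T) :=
    IsPullback.of_horiz_isIso ⟨by simp⟩
  exact S.fib_pb_stable _ _ _ _ sq (S.fib_toT _)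

theorem isIso_of_terminal {X Y : E} (h1 : IsTerminal X) (h2 : IsTerminal Y) (f : X ⟶ Y) :
    IsIso f :=
  ⟨h1.from Y, h1.hom_ext _ _, h2.hom_ext _ _⟩

/-- transport a pullback square along isos of the three cospan corners -/
theorem isPullback_transport {P X X' Y Y' Z Z' : E} {fst : P ⟶ X} {snd : P ⟶ Y}
    {f : X ⟶ Z} {g : Y ⟶ Z} (pb : IsPullback fst snd f g)
    (eX : X ≅ X') (eY : Y ≅ Y') (eZ : Z ≅ Z') {f' : X' ⟶ Z'} {g' : Y' ⟶ Z'}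
    (hf : eX.hom ≫ f' = f ≫ eZ.hom) (hg : eY.hom ≫ g' = g ≫ eZ.hom) :
    IsPullback (fst ≫ eX.hom) (snd ≫ eY.hom) f' g' := by
  have Sq2 : IsPullback eY.hom g g' eZ.hom := IsPullback.of_horiz_isIso ⟨hg⟩
  have t1 := (pb.flip.paste_horiz Sq2).flip
  -- t1 : IsPullback fst (snd ≫ eY.hom) (f ≫ eZ.hom) g'
  have Sq1 : IsPullback eX.hom (f ≫ eZ.hom) f' (𝟙 Z') :=
    IsPullback.of_horiz_isIso ⟨by rw [Category.comp_id, hf]⟩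
  simpa using t1.paste_horiz Sq1

end Basics

section Gap
variable {S : Clan C} {S' : Clan D}

theorem clanHom_ext {X Y : ClanMorCat S S'} {f g : X ⟶ Y}
    (h : ∀ c, f.hom.app c = g.hom.app c) : f = g :=
  InducedCategory.hom_ext (NatTrans.ext (funext h))

theorem clanComp_app {X Y Z : ClanMorCat S S'} (f : X ⟶ Y) (g : Y ⟶ Z) (c : C) :
    (f ≫ g : X ⟶ Z).hom.app c
      = f.hom.app c ≫ g.hom.app c := rfl

theorem clanHom_app_eq {X Y : ClanMorCat S S'} {f g : X ⟶ Y} (h : f = g) (c : C) :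
    f.hom.app c = g.hom.app c := by rw [h]

theorem gapFib_of_witness {A B : ClanMorCat S S'} (α : A ⟶ B)
    (H : ∀ ⦃c c' : C⦄ (f : c ⟶ c'), S.Fib f →
      ∃ (P₀ : D) (p₀ : P₀ ⟶ A.obj.obj c') (q₀ : P₀ ⟶ B.obj.obj c) (h₀ : A.obj.obj c ⟶ P₀),
        IsPullback p₀ q₀ (α.hom.app c') (B.obj.map f) ∧
        h₀ ≫ p₀ = A.obj.map f ∧ h₀ ≫ q₀ = α.hom.app c ∧ S'.Fib h₀) :
    GapFib S S' α := by
  intro c c' f hf P p q hpb h hp hq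
  obtain ⟨P₀, p₀, q₀, h₀, pb₀, hp₀, hq₀, fib₀⟩ := H f hf
  have hh : h = h₀ ≫ (pb₀.isoIsPullback _ _ hpb).hom := by
    apply hpb.hom_ext
    · rw [hp, Category.assoc, IsPullback.isoIsPullback_hom_fst, hp₀]
    · rw [hq, Category.assoc, IsPullback.isoIsPullback_hom_snd, hq₀]
  exact S'.fib_iso h₀ h (Arrow.isoMk (Iso.refl _) (pb₀.isoIsPullback _ _ hpb) (by simp [hh]))
    fib₀

theorem gapFib_pointwise {A B : ClanMorCat S S'} (α : A ⟶ B) (hα : GapFib S S' α) (c : C) :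
    S'.Fib (α.hom.app c) := by
  obtain ⟨hTA⟩ := A.property.2.1
  obtain ⟨hTB⟩ := B.property.2.1
  have hiso : IsIso (α.hom.app S.T) := isIso_of_terminal hTA hTB _
  have hsq : IsPullback (hTA.from (B.obj.obj c)) (𝟙 (B.obj.obj c))
      (α.hom.app S.T) (B.obj.map (S.isTerminalT.from c)) :=
    IsPullback.of_vert_isIso ⟨hTB.hom_ext _ _⟩
  exact hα (S.isTerminalT.from c) (S.fib_toT _) _ _ hsq
    (α.hom.app c) (hTA.hom_ext _ _) (Category.comp_id _)

end Gap

section Iso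
variable {S : Clan C} {S' : Clan D}

theorem gapFib_iso {A B A' B' : ClanMorCat S S'} (α : A ⟶ B) (α' : A' ⟶ B')
    (e : Arrow.mk α ≅ Arrow.mk α') (hα : GapFib S S' α) : GapFib S S' α' := by
  set L : A ⟶ A' := e.hom.left with hLdef
  set R : B ⟶ B' := e.hom.right with hRdef
  set L' : A' ⟶ A := e.inv.left with hL'def
  set R' : B' ⟶ B := e.inv.right with hR'def
  have hLL' : ∀ c, L.hom.app c ≫ L'.hom.app c = 𝟙 _ := by
    intro c
    have : (L ≫ L' : A ⟶ A) = 𝟙 A := by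
      rw [hLdef, hL'def, ← Arrow.comp_left, e.hom_inv_id]; rfl
    exact clanHom_app_eq this c
  have hL'L : ∀ c, L'.hom.app c ≫ L.hom.app c = 𝟙 _ := by
    intro c
    have : (L' ≫ L : A' ⟶ A') = 𝟙 A' := by
      rw [hLdef, hL'def, ← Arrow.comp_left, e.inv_hom_id]; rfl
    exact clanHom_app_eq this c
  have hRR' : ∀ c, R.hom.app c ≫ R'.hom.app c = 𝟙 _ := by
    intro c
    have : (R ≫ R' : B ⟶ B) = 𝟙 B := by
      rw [hRdef, hR'def, ← Arrow.comp_right, e.hom_inv_id]; rfl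
    exact clanHom_app_eq this c
  have hR'R : ∀ c, R'.hom.app c ≫ R.hom.app c = 𝟙 _ := by
    intro c
    have : (R' ≫ R : B' ⟶ B') = 𝟙 B' := by
      rw [hRdef, hR'def, ← Arrow.comp_right, e.inv_hom_id]; rfl
    exact clanHom_app_eq this c
  have hw : ∀ c, L.hom.app c ≫ α'.hom.app c
      = α.hom.app c ≫ R.hom.app c := by
    intro c
    have := e.hom.w
    exact clanHom_app_eq this c
  have hw' : ∀ c, L'.hom.app c ≫ α.hom.app c
      = α'.hom.app c ≫ R'.hom.app c := by
    intro c
    have := e.inv.w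
    exact clanHom_app_eq this c
  intro c c' f hf P p q hpb h hp hq
  have pb2 : IsPullback (p ≫ L'.hom.app c')
      (q ≫ R'.hom.app c)
      (α.hom.app c') (B.obj.map f) := by
    refine isPullback_transport hpb
      ⟨L'.hom.app c', L.hom.app c', hL'L c', hLL' c'⟩
      ⟨R'.hom.app c, R.hom.app c, hR'R c, hRR' c⟩
      ⟨R'.hom.app c', R.hom.app c', hR'R c', hRR' c'⟩
      (hw' c') ?_
    exact (R'.hom.naturality f).symm
  have hp2 : (L.hom.app c ≫ h) ≫ p ≫ L'.hom.app c'
      = A.obj.map f := by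
    rw [Category.assoc, ← Category.assoc h, hp, ← Category.assoc,
      ← L.hom.naturality f, Category.assoc, hLL' c', Category.comp_id]
  have hq2 : (L.hom.app c ≫ h) ≫ q ≫ R'.hom.app c
      = α.hom.app c := by
    rw [Category.assoc, ← Category.assoc h, hq, ← Category.assoc, hw c,
      Category.assoc, hRR' c, Category.comp_id]
  have fib2 : S'.Fib (L.hom.app c ≫ h) :=
    hα f hf _ _ pb2 _ hp2 hq2
  exact S'.fib_iso _ h
    (Arrow.isoMk ⟨L.hom.app c, L'.hom.app c,
      hLL' c, hL'L c⟩ (Iso.refl _) (by simp)) fib2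

end Iso


section Comp
variable {S : Clan C} {S' : Clan D}

theorem gapFib_comp {A B E : ClanMorCat S S'} (α : A ⟶ B) (β : B ⟶ E)
    (hα : GapFib S S' α) (hβ : GapFib S S' β) : GapFib S S' (α ≫ β) := by
  apply gapFib_of_witness
  intro c c' f hf
  -- pullback Q of (β.app c', E.map f)
  obtain ⟨Q, q₁, q₂, pbQ, fibq₁⟩ :=
    S'.fib_pb_exists (β.hom.app c') (E.obj.map f) (E.property.1 f hf)
  have wβ : B.obj.map f ≫ β.hom.app c'
      = β.hom.app c ≫ E.obj.map f := β.hom.naturality f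
  set hβg : B.obj.obj c ⟶ Q := pbQ.lift (B.obj.map f) (β.hom.app c) wβ
    with hβgdef
  have hβg1 : hβg ≫ q₁ = B.obj.map f := pbQ.lift_fst _ _ _
  have hβg2 : hβg ≫ q₂ = β.hom.app c := pbQ.lift_snd _ _ _
  have fibhβg : S'.Fib hβg := hβ f hf _ _ pbQ _ hβg1 hβg2
  -- pullback R of (α.app c', q₁)
  obtain ⟨R, r₁, r₂, pbR, fibr₁⟩ :=
    S'.fib_pb_exists (α.hom.app c') q₁ fibq₁
  -- pullback Q' of (α.app c', B.map f)
  obtain ⟨Q', s₁, s₂, pbQ', fibs₁⟩ :=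
    S'.fib_pb_exists (α.hom.app c') (B.obj.map f) (B.property.1 f hf)
  have wα : A.obj.map f ≫ α.hom.app c'
      = α.hom.app c ≫ B.obj.map f := α.hom.naturality f
  set hαg : A.obj.obj c ⟶ Q' := pbQ'.lift (A.obj.map f) (α.hom.app c) wα
    with hαgdef
  have hαg1 : hαg ≫ s₁ = A.obj.map f := pbQ'.lift_fst _ _ _
  have hαg2 : hαg ≫ s₂ = α.hom.app c := pbQ'.lift_snd _ _ _
  have fibhαg : S'.Fib hαg := hα f hf _ _ pbQ' _ hαg1 hαg2
  -- the connecting map χ : Q' ⟶ R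
  have wχ : s₁ ≫ α.hom.app c' = (s₂ ≫ hβg) ≫ q₁ := by
    rw [Category.assoc, hβg1]; exact pbQ'.w
  set χ : Q' ⟶ R := pbR.lift s₁ (s₂ ≫ hβg) wχ with χdef
  have χ1 : χ ≫ r₁ = s₁ := pbR.lift_fst _ _ _
  have χ2 : χ ≫ r₂ = s₂ ≫ hβg := pbR.lift_snd _ _ _
  -- χ is a pullback of hβg, hence a fibration
  have sbig : IsPullback (χ ≫ r₁) s₂ (α.hom.app c') (hβg ≫ q₁) := by
    rw [χ1, hβg1]; exact pbQ'
  have pbχ : IsPullback χ s₂ r₂ hβg := IsPullback.of_right sbig χ2 pbR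
  have fibχ : S'.Fib χ := S'.fib_pb_stable _ _ _ _ pbχ fibhβg
  -- assemble the witness
  refine ⟨R, r₁, r₂ ≫ q₂, hαg ≫ χ, ?_, ?_, ?_, ?_⟩
  · exact pbR.paste_vert pbQ
  · rw [Category.assoc, χ1, hαg1]
  · show (hαg ≫ χ) ≫ r₂ ≫ q₂
      = α.hom.app c ≫ β.hom.app c
    rw [Category.assoc, ← Category.assoc χ, χ2, Category.assoc, hβg2,
      ← Category.assoc, hαg2]
  · exact S'.fib_comp _ _ fibhαg fibχ

end Comp


section W
variable {S : Clan C} {S' : Clan D} {A B E : ClanMorCat S S'}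

noncomputable def Wd (γ : A ⟶ B) (β : E ⟶ B) (hβ : GapFib S S' β) (c : C) :
    Σ' (P : D) (p : P ⟶ A.obj.obj c) (q : P ⟶ E.obj.obj c),
      IsPullback p q (γ.hom.app c) (β.hom.app c) ∧ S'.Fib p := by
  have h := S'.fib_pb_exists (γ.hom.app c) (β.hom.app c)
    (gapFib_pointwise β hβ c)
  exact ⟨h.choose, h.choose_spec.choose, h.choose_spec.choose_spec.choose,
    h.choose_spec.choose_spec.choose_spec⟩

variable (γ : A ⟶ B) (β : E ⟶ B) (hβ : GapFib S S' β)

noncomputable def Wo (c : C) : D := (Wd γ β hβ c).1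

noncomputable def w1 (c : C) : Wo γ β hβ c ⟶ A.obj.obj c := (Wd γ β hβ c).2.1

noncomputable def w2 (c : C) : Wo γ β hβ c ⟶ E.obj.obj c := (Wd γ β hβ c).2.2.1

theorem wpb (c : C) : IsPullback (w1 γ β hβ c) (w2 γ β hβ c)
    (γ.hom.app c) (β.hom.app c) := (Wd γ β hβ c).2.2.2.1

theorem wfib (c : C) : S'.Fib (w1 γ β hβ c) := (Wd γ β hβ c).2.2.2.2

theorem Wnat {c c' : C} (f : c ⟶ c') :
    (w1 γ β hβ c ≫ A.obj.map f) ≫ γ.hom.app c'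
      = (w2 γ β hβ c ≫ E.obj.map f) ≫ β.hom.app c' := by
  rw [Category.assoc, γ.hom.naturality f, ← Category.assoc, (wpb γ β hβ c).w,
    Category.assoc, ← β.hom.naturality f, Category.assoc]

noncomputable def Wfun : C ⥤ D where
  obj c := Wo γ β hβ c
  map {c c'} f := (wpb γ β hβ c').lift (w1 γ β hβ c ≫ A.obj.map f)
    (w2 γ β hβ c ≫ E.obj.map f) (Wnat γ β hβ f)
  map_id c := by
    apply (wpb γ β hβ c).hom_ext
    · rw [IsPullback.lift_fst, Category.id_comp, CategoryTheory.Functor.map_id, Category.comp_id]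
    · rw [IsPullback.lift_snd, Category.id_comp, CategoryTheory.Functor.map_id, Category.comp_id]
  map_comp {c c' c''} f g := by
    apply (wpb γ β hβ c'').hom_ext
    · rw [IsPullback.lift_fst, Category.assoc, IsPullback.lift_fst, ← Category.assoc,
        IsPullback.lift_fst, CategoryTheory.Functor.map_comp, Category.assoc]
    · rw [IsPullback.lift_snd, Category.assoc, IsPullback.lift_snd, ← Category.assoc,
        IsPullback.lift_snd, CategoryTheory.Functor.map_comp, Category.assoc]

attribute [reducible] Wfun

theorem Wmap_w1 {c c' : C} (f : c ⟶ c') :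
    (Wfun γ β hβ).map f ≫ w1 γ β hβ c' = w1 γ β hβ c ≫ A.obj.map f :=
  IsPullback.lift_fst _ _ _ _

theorem Wmap_w2 {c c' : C} (f : c ⟶ c') :
    (Wfun γ β hβ).map f ≫ w2 γ β hβ c' = w2 γ β hβ c ≫ E.obj.map f :=
  IsPullback.lift_snd _ _ _ _

end W


section W2
variable {S : Clan C} {S' : Clan D} {A B E : ClanMorCat S S'}
variable (γ : A ⟶ B) (β : E ⟶ B) (hβ : GapFib S S' β)

theorem Wgap {c c' : C} (f : c ⟶ c') (hf : S.Fib f) :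
    ∃ (R : D) (r₁ : R ⟶ A.obj.obj c) (r₂ : R ⟶ Wo γ β hβ c') (g : Wo γ β hβ c ⟶ R),
      IsPullback r₂ r₁ (w1 γ β hβ c') (A.obj.map f) ∧
      g ≫ r₂ = (Wfun γ β hβ).map f ∧ g ≫ r₁ = w1 γ β hβ c ∧ S'.Fib g ∧ S'.Fib r₂ := by
  obtain ⟨R, rA, rW, pbR, fibrA⟩ :=
    S'.fib_pb_exists (A.obj.map f) (w1 γ β hβ c') (wfib γ β hβ c')
  have wg : w1 γ β hβ c ≫ A.obj.map f = (Wfun γ β hβ).map f ≫ w1 γ β hβ c' :=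
    (Wmap_w1 γ β hβ f).symm
  set g : Wo γ β hβ c ⟶ R := pbR.lift (w1 γ β hβ c) ((Wfun γ β hβ).map f) wg with gdef
  have g1 : g ≫ rA = w1 γ β hβ c := pbR.lift_fst _ _ _
  have g2 : g ≫ rW = (Wfun γ β hβ).map f := pbR.lift_snd _ _ _
  have fibrW : S'.Fib rW := S'.fib_pb_stable _ _ _ _ pbR.flip (A.property.1 f hf)
  obtain ⟨Q, q₁, q₂, pbQ, fibq₁⟩ :=
    S'.fib_pb_exists (β.hom.app c') (B.obj.map f) (B.property.1 f hf)
  have wβn : E.obj.map f ≫ β.hom.app c'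
      = β.hom.app c ≫ B.obj.map f := β.hom.naturality f
  set hβg : E.obj.obj c ⟶ Q := pbQ.lift (E.obj.map f) (β.hom.app c) wβn
    with hβgdef
  have hβg1 : hβg ≫ q₁ = E.obj.map f := pbQ.lift_fst _ _ _
  have hβg2 : hβg ≫ q₂ = β.hom.app c := pbQ.lift_snd _ _ _
  have fibhβg : S'.Fib hβg := hβ f hf _ _ pbQ _ hβg1 hβg2
  have wm : (rW ≫ w2 γ β hβ c') ≫ β.hom.app c'
      = (rA ≫ γ.hom.app c) ≫ B.obj.map f := by
    rw [Category.assoc, ← (wpb γ β hβ c').w, ← Category.assoc, ← pbR.w, Category.assoc,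
      γ.hom.naturality f, Category.assoc]
  set m : R ⟶ Q := pbQ.lift (rW ≫ w2 γ β hβ c') (rA ≫ γ.hom.app c) wm
    with mdef
  have m1 : m ≫ q₁ = rW ≫ w2 γ β hβ c' := pbQ.lift_fst _ _ _
  have m2 : m ≫ q₂ = rA ≫ γ.hom.app c := pbQ.lift_snd _ _ _
  have scomp : IsPullback rA (m ≫ q₁)
      (γ.hom.app c ≫ B.obj.map f) (β.hom.app c') := by
    rw [m1, ← γ.hom.naturality f]
    exact pbR.paste_vert (wpb γ β hβ c')
  have S2 : IsPullback rA m (γ.hom.app c) q₂ :=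
    IsPullback.of_bot scomp m2.symm pbQ.flip
  have S4comp : IsPullback (g ≫ rA) (w2 γ β hβ c)
      (γ.hom.app c) (hβg ≫ q₂) := by
    rw [g1, hβg2]; exact wpb γ β hβ c
  have p4 : g ≫ m = w2 γ β hβ c ≫ hβg := by
    apply pbQ.hom_ext
    · rw [Category.assoc, m1, ← Category.assoc, g2, Wmap_w2, Category.assoc, hβg1]
    · rw [Category.assoc, m2, ← Category.assoc, g1, (wpb γ β hβ c).w, Category.assoc, hβg2]
  have S4 : IsPullback g (w2 γ β hβ c) m hβg := IsPullback.of_right S4comp p4 S2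
  have fibg : S'.Fib g := S'.fib_pb_stable _ _ _ _ S4 fibhβg
  exact ⟨R, rA, rW, g, pbR.flip, g2, g1, fibg, fibrW⟩

theorem Wfun_isClanMor : IsClanMor S S' (Wfun γ β hβ) := by
  refine ⟨?_, ?_, ?_⟩
  · intro c c' f hf
    obtain ⟨R, r₁, r₂, g, pbR2, g2, g1, fibg, fibr₂⟩ := Wgap γ β hβ f hf
    rw [← g2]
    exact S'.fib_comp _ _ fibg fibr₂
  · obtain ⟨hTA⟩ := A.property.2.1
    obtain ⟨hTB⟩ := B.property.2.1
    obtain ⟨hTE⟩ := E.property.2.1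
    exact ⟨IsTerminal.ofUniqueHom
      (fun X => (wpb γ β hβ S.T).lift (hTA.from X) (hTE.from X) (hTB.hom_ext _ _))
      (fun X m => (wpb γ β hβ S.T).hom_ext (hTA.hom_ext _ _) (hTE.hom_ext _ _))⟩
  · intro d a b c p q g f hpq hf
    have Asq := A.property.2.2 p q g f hpq hf
    have Bsq := B.property.2.2 p q g f hpq hf
    have Esq := E.property.2.2 p q g f hpq hf
    have wsq : (Wfun γ β hβ).map p ≫ (Wfun γ β hβ).map g
        = (Wfun γ β hβ).map q ≫ (Wfun γ β hβ).map f := by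
      rw [← CategoryTheory.Functor.map_comp, ← CategoryTheory.Functor.map_comp, hpq.w]
    refine IsPullback.of_isLimit' ⟨wsq⟩ ?_
    have liftA : ∀ s : PullbackCone ((Wfun γ β hβ).map g) ((Wfun γ β hβ).map f),
        (s.fst ≫ w1 γ β hβ a) ≫ A.obj.map g = (s.snd ≫ w1 γ β hβ c) ≫ A.obj.map f := by
      intro s
      rw [Category.assoc, ← Wmap_w1, Category.assoc, ← Wmap_w1, ← Category.assoc,
        ← Category.assoc, s.condition]
    have liftE : ∀ s : PullbackCone ((Wfun γ β hβ).map g) ((Wfun γ β hβ).map f),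
        (s.fst ≫ w2 γ β hβ a) ≫ E.obj.map g = (s.snd ≫ w2 γ β hβ c) ≫ E.obj.map f := by
      intro s
      rw [Category.assoc, ← Wmap_w2, Category.assoc, ← Wmap_w2, ← Category.assoc,
        ← Category.assoc, s.condition]
    have agree : ∀ s : PullbackCone ((Wfun γ β hβ).map g) ((Wfun γ β hβ).map f),
        Asq.lift _ _ (liftA s) ≫ γ.hom.app d
          = Esq.lift _ _ (liftE s) ≫ β.hom.app d := by
      intro s
      have hγp : γ.hom.app d ≫ B.obj.map p
          = A.obj.map p ≫ γ.hom.app a := (γ.hom.naturality p).symm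
      have hβp : β.hom.app d ≫ B.obj.map p
          = E.obj.map p ≫ β.hom.app a := (β.hom.naturality p).symm
      have hγq : γ.hom.app d ≫ B.obj.map q
          = A.obj.map q ≫ γ.hom.app c := (γ.hom.naturality q).symm
      have hβq : β.hom.app d ≫ B.obj.map q
          = E.obj.map q ≫ β.hom.app c := (β.hom.naturality q).symm
      apply Bsq.hom_ext
      · conv_lhs => rw [Category.assoc, hγp, ← Category.assoc, Asq.lift_fst,
          Category.assoc, (wpb γ β hβ a).w]
        conv_rhs => rw [Category.assoc, hβp, ← Category.assoc, Esq.lift_fst,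
          Category.assoc]
      · conv_lhs => rw [Category.assoc, hγq, ← Category.assoc, Asq.lift_snd,
          Category.assoc, (wpb γ β hβ c).w]
        conv_rhs => rw [Category.assoc, hβq, ← Category.assoc, Esq.lift_snd,
          Category.assoc]
    refine PullbackCone.IsLimit.mk wsq
      (fun s => (wpb γ β hβ d).lift (Asq.lift _ _ (liftA s)) (Esq.lift _ _ (liftE s))
        (agree s)) ?_ ?_ ?_
    · intro s
      apply (wpb γ β hβ a).hom_ext
      · rw [Category.assoc, Wmap_w1, ← Category.assoc, IsPullback.lift_fst, Asq.lift_fst]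
      · rw [Category.assoc, Wmap_w2, ← Category.assoc, IsPullback.lift_snd, Esq.lift_fst]
    · intro s
      apply (wpb γ β hβ c).hom_ext
      · rw [Category.assoc, Wmap_w1, ← Category.assoc, IsPullback.lift_fst, Asq.lift_snd]
      · rw [Category.assoc, Wmap_w2, ← Category.assoc, IsPullback.lift_snd, Esq.lift_snd]
    · intro s mm h1 h2
      apply (wpb γ β hβ d).hom_ext
      · rw [IsPullback.lift_fst]
        apply Asq.hom_ext
        · rw [Category.assoc, ← Wmap_w1, ← Category.assoc, h1, Asq.lift_fst]
        · rw [Category.assoc, ← Wmap_w1, ← Category.assoc, h2, Asq.lift_snd]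
      · rw [IsPullback.lift_snd]
        apply Esq.hom_ext
        · rw [Category.assoc, ← Wmap_w2, ← Category.assoc, h1, Esq.lift_fst]
        · rw [Category.assoc, ← Wmap_w2, ← Category.assoc, h2, Esq.lift_snd]

end W2


section W3
variable {S : Clan C} {S' : Clan D} {A B E : ClanMorCat S S'}
variable (γ : A ⟶ B) (β : E ⟶ B) (hβ : GapFib S S' β)

noncomputable def WW : ClanMorCat S S' := ⟨Wfun γ β hβ, Wfun_isClanMor γ β hβ⟩

noncomputable def Wpr1nat : Wfun γ β hβ ⟶ A.obj where
  app c := w1 γ β hβ c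
  naturality _ _ f := Wmap_w1 γ β hβ f

noncomputable def Wpr2nat : Wfun γ β hβ ⟶ E.obj where
  app c := w2 γ β hβ c
  naturality _ _ f := Wmap_w2 γ β hβ f

noncomputable def Wpr1 : WW γ β hβ ⟶ A := ObjectProperty.homMk (Wpr1nat γ β hβ)
noncomputable def Wpr2 : WW γ β hβ ⟶ E := ObjectProperty.homMk (Wpr2nat γ β hβ)

theorem Wsq : Wpr1 γ β hβ ≫ γ = Wpr2 γ β hβ ≫ β :=
  clanHom_ext (fun c => (wpb γ β hβ c).w)

noncomputable def WisPb : IsPullback (Wpr1 γ β hβ) (Wpr2 γ β hβ) γ β := by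
  have hcond : ∀ (s : PullbackCone γ β) (c : C),
      s.fst.hom.app c ≫ γ.hom.app c
        = s.snd.hom.app c ≫ β.hom.app c :=
    fun s c => clanHom_app_eq s.condition c
  refine IsPullback.of_isLimit' ⟨Wsq γ β hβ⟩ ?_
  refine PullbackCone.IsLimit.mk (Wsq γ β hβ) (fun s => ?lift) ?_ ?_ ?_
  case lift =>
    exact ObjectProperty.homMk <| show s.pt.obj ⟶ Wfun γ β hβ from
      { app := fun c => (wpb γ β hβ c).lift (s.fst.hom.app c)
          (s.snd.hom.app c) (hcond s c)
        naturality := fun c c' f => by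
          apply (wpb γ β hβ c').hom_ext
          · rw [Category.assoc, IsPullback.lift_fst, Category.assoc, Wmap_w1,
              ← Category.assoc, IsPullback.lift_fst,
              s.fst.hom.naturality f]
          · rw [Category.assoc, IsPullback.lift_snd, Category.assoc, Wmap_w2,
              ← Category.assoc, IsPullback.lift_snd,
              s.snd.hom.naturality f] }
  · intro s
    exact clanHom_ext (fun c => IsPullback.lift_fst _ _ _ _)
  · intro s
    exact clanHom_ext (fun c => IsPullback.lift_snd _ _ _ _)
  · intro s m h1 h2
    refine clanHom_ext (fun c => ?_)
    apply (wpb γ β hβ c).hom_ext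
    · erw [IsPullback.lift_fst]
      exact clanHom_app_eq h1 c
    · erw [IsPullback.lift_snd]
      exact clanHom_app_eq h2 c

theorem gapFib_Wpr1 : GapFib S S' (Wpr1 γ β hβ) := by
  apply gapFib_of_witness
  intro c c' f hf
  obtain ⟨R, r₁, r₂, g, pbflip, g2, g1, fibg, _⟩ := Wgap γ β hβ f hf
  exact ⟨R, r₂, r₁, g, pbflip, g2, g1, fibg⟩

end W3

section Terminal
variable {S : Clan C} {S' : Clan D}

theorem constT_isClanMor : IsClanMor S S' ((Functor.const C).obj S'.T) := by
  refine ⟨fun a b f _ => ?_, ⟨S'.isTerminalT⟩, fun d a b c p q g f _ _ => ?_⟩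
  · exact fib_id S' S'.T
  · show IsPullback (𝟙 S'.T) (𝟙 S'.T) (𝟙 S'.T) (𝟙 S'.T)
    exact IsPullback.of_horiz_isIso ⟨by simp⟩

noncomputable def Tobj : ClanMorCat S S' := ⟨(Functor.const C).obj S'.T, constT_isClanMor⟩

noncomputable def isTerminalTobj : IsTerminal (Tobj (S := S) (S' := S')) :=
  IsTerminal.ofUniqueHom
    (fun X => ObjectProperty.homMk <| show X.obj ⟶ (Functor.const C).obj S'.T from
      { app := fun c => S'.isTerminalT.from _
        naturality := fun _ _ f => S'.isTerminalT.hom_ext _ _ })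
    (fun X m => clanHom_ext (fun c => S'.isTerminalT.hom_ext _ _))

theorem gapFib_toT (A : ClanMorCat S S') (τ : A ⟶ Tobj (S := S) (S' := S')) :
    GapFib S S' τ := by
  apply gapFib_of_witness
  intro c c' f hf
  refine ⟨A.obj.obj c', 𝟙 _, S'.isTerminalT.from _, A.obj.map f, ?_, by simp,
    S'.isTerminalT.hom_ext _ _, A.property.1 f hf⟩
  show IsPullback (𝟙 (A.obj.obj c')) (S'.isTerminalT.from _)
    (τ.hom.app c') (𝟙 S'.T)
  exact @IsPullback.of_horiz_isIso D _ _ _ _ _ _ _ _ _ _ (IsIso.id S'.T)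
    ⟨S'.isTerminalT.hom_ext _ _⟩

end Terminal

end ClanAux


/-- For clans `C` and `D`, the category of clan morphisms `C ⊸ D` (with
natural transformations as morphisms and limits computed pointwise) is itself a clan, in which
`α : F ⟶ G` is a fibration iff for every fibration `c ↠ c'` in `C` the gap map
`F(c) ⟶ F(c') ×_{G(c')} G(c)` is a fibration in `D`; moreover every fibration in `C ⊸ D` is a
pointwise fibration. -/
theorem clan_hom_is_clan (S : Clan C) (S' : Clan D) :
    ∃ SF : Clan (ClanMorCat S S'),
      (∀ (A B : ClanMorCat S S') (α : A ⟶ B), SF.Fib α ↔ GapFib S S' α) ∧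
      (∀ (A B : ClanMorCat S S') (α : A ⟶ B), SF.Fib α →
        ∀ c : C, S'.Fib (α.hom.app c)) := by
  refine ⟨{ Fib := fun {A B} α => GapFib S S' α
            T := ClanAux.Tobj
            isTerminalT := ClanAux.isTerminalTobj
            fib_toT := fun {A} τ => ClanAux.gapFib_toT A τ
            fib_iso := fun {a b a' b'} f f' e hf => ClanAux.gapFib_iso f f' e hf
            fib_comp := fun {a b c} f g hf hg => ClanAux.gapFib_comp f g hf hg
            fib_pb_exists := fun {a b c} γ β hβ =>
              ⟨ClanAux.WW γ β hβ, ClanAux.Wpr1 γ β hβ, ClanAux.Wpr2 γ β hβ,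
                ClanAux.WisPb γ β hβ, ClanAux.gapFib_Wpr1 γ β hβ⟩
            fib_pb_stable := fun {d a b c} p q γ β hpb hβ =>
              ClanAux.gapFib_iso (ClanAux.Wpr1 γ β hβ) p
                (Arrow.isoMk ((ClanAux.WisPb γ β hβ).isoIsPullback _ _ hpb) (Iso.refl _)
                  (by simp))
                (ClanAux.gapFib_Wpr1 γ β hβ) },
    fun A B α => Iff.rfl, fun A B α h c => ClanAux.gapFib_pointwise α h c⟩
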